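/- arXiv:1205.7016 — 4 statements merged into one kernel-verified Lean document; each statement's English description precedes it below -/
import Mathlib

section
/- Let q be a prime power with q ≥ 4, let l ≥ 1, let a_1, ..., a_l be distinct elements of F_q, let D = F_q \ {a_1, ..., a_l}, and let 2 ≤ k ≤ q - l - 1. For each j with 1 ≤ j ≤ l, let u_j(x) = λ_j (x - a_j)^{q-2} + r_j(x), where λ_j ∈ F_q is nonzero and r_j(x) ∈ F_q[x] has degree at most k-1. Then the received word u_j(D) = (u_j(x))_{x ∈ D} is a deep hole of the generalized Reed-Solomon code C_q(D,k), i.e., d(u_j(D), C_q(D,k)) = (q - l) - k. -/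
open Polynomial

/-- The generalized Reed-Solomon code `C_q(D, k)`: the set of words
`(f(x))_{x ∈ D}` for polynomials `f ∈ F_q[x]` of degree at most `k - 1`. -/
def genRSCode (F : Type*) [Field F] (D : Finset F) (k : ℕ) : Set (↥D → F) :=
  {w | ∃ f : F[X], f.degree < (k : ℕ) ∧ ∀ x : ↥D, w x = f.eval (x : F)}

/-- The error distance `d(u, C_q(D, k))` of a received word `u ∈ F_q^n` to the
generalized Reed-Solomon code: the minimum Hamming distance to a codeword. -/
noncomputable def errDist {F : Type*} [Field F] [DecidableEq F]
    (D : Finset F) (k : ℕ) (u : ↥D → F) : ℕ :=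
  sInf {d : ℕ | ∃ w ∈ genRSCode F D k, d = hammingDist u w}

/-- Let `q ≥ 4`, let `a_1, ..., a_l` be distinct elements of `F_q`,
`D = F_q \ {a_1, ..., a_l}`, and `2 ≤ k ≤ q - l - 1`.  For
`u_j(x) = λ_j (x - a_j)^(q-2) + r_j(x)` with `λ_j ≠ 0` and `deg r_j ≤ k - 1`,
the word `u_j(D)` is a deep hole of `C_q(D, k)`. -/
theorem uj_is_deep_hole {F : Type*} [Field F] [Fintype F] [DecidableEq F]
    (q l k : ℕ) (hq : q = Fintype.card F) (hq4 : 4 ≤ q) (hl : 1 ≤ l)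
    (a : Fin l → F) (ha : Function.Injective a)
    (D : Finset F) (hD : D = Finset.univ \ Finset.image a Finset.univ)
    (hk2 : 2 ≤ k) (hk : k ≤ q - l - 1)
    (j : Fin l) (lam : F) (hlam : lam ≠ 0)
    (r : F[X]) (hr : r.degree < (k : ℕ))
    (u : F[X]) (hu : u = C lam * (X - C (a j)) ^ (q - 2) + r) :
    errDist D k (fun x : ↥D => u.eval (x : F)) = (q - l) - k := by
  classical
  have hlq : l + 3 ≤ q := by
    have h2 : 2 ≤ q - l - 1 := hk2.trans hk
    omega
  have hcardD : D.card = q - l := by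
    subst hD
    rw [Finset.card_sdiff_of_subset (Finset.subset_univ _),
      Finset.card_image_of_injective _ ha]
    simp [hq]
  have hcardD' : Fintype.card ↥D = q - l := by
    rw [Fintype.card_coe, hcardD]
  have hkD : k ≤ D.card := by rw [hcardD]; omega
  -- x ∈ D implies x ≠ a j
  have hxne : ∀ x : F, x ∈ D → (x : F) - a j ≠ 0 := by
    intro x hx
    rw [sub_ne_zero]
    subst hD
    simp only [Finset.mem_sdiff, Finset.mem_univ, true_and, Finset.mem_image,
      not_exists] at hx
    intro h
    exact hx j h.symm
  -- (q-2) power is inverse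
  have hpow : ∀ y : F, y ≠ 0 → y ^ (q - 2) = y⁻¹ := by
    intro y hy
    have h1 : y ^ (q - 1) = 1 := by
      rw [hq]; exact FiniteField.pow_card_sub_one_eq_one y hy
    have h2 : q - 1 = (q - 2) + 1 := by omega
    exact eq_inv_of_mul_eq_one_left (by rw [← pow_succ, ← h2, h1])
  -- key: agreement set has card ≤ k
  have key : ∀ f : F[X], f.degree < (k : ℕ) →
      (Finset.univ.filter
        (fun x : ↥D => u.eval (x : F) = f.eval (x : F))).card ≤ k := by
    intro f hf
    set g : F[X] := (r - f) * (X - C (a j)) + C lam with hg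
    have hgaj : g.eval (a j) = lam := by simp [hg]
    have hg0 : g ≠ 0 := by
      intro h
      rw [h] at hgaj
      simp at hgaj
      exact hlam hgaj.symm
    have hrf : (r - f).natDegree + 1 ≤ k := by
      rcases eq_or_ne (r - f) 0 with h | h
      · simp only [h, natDegree_zero]; omega
      · have := (Polynomial.natDegree_lt_iff_degree_lt h).mpr
          (lt_of_le_of_lt (degree_sub_le r f) (max_lt hr hf))
        omega
    have hgdeg : g.natDegree ≤ k := by
      refine le_trans (natDegree_add_le _ _) (max_le ?_ ?_)
      · refine le_trans (natDegree_mul_le) ?_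
        rw [natDegree_X_sub_C]
        omega
      · simp
    -- each agreement point is a root of g
    have hmem : ∀ x : ↥D, u.eval (x : F) = f.eval (x : F) →
        (x : F) ∈ g.roots.toFinset := by
      intro x hx
      have hy : (x : F) - a j ≠ 0 := hxne x x.2
      rw [Multiset.mem_toFinset, mem_roots hg0]
      have hue : u.eval (x : F) = lam * ((x : F) - a j)⁻¹ + r.eval (x : F) := by
        rw [hu]; simp [hpow _ hy]
      rw [hue] at hx
      have : g.eval (x : F) = (r.eval (x : F) - f.eval (x : F)) * ((x : F) - a j) + lam := by
        simp [hg]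
      rw [IsRoot, this]
      field_simp at hx
      linear_combination hx
    calc (Finset.univ.filter
        (fun x : ↥D => u.eval (x : F) = f.eval (x : F))).card
        ≤ g.roots.toFinset.card := by
          refine Finset.card_le_card_of_injOn Subtype.val ?_ ?_
          · intro x hx
            simp only [Finset.coe_filter, Set.mem_setOf_eq, Finset.mem_filter] at hx
            exact hmem x hx.2
          · intro x _ y _ hxy
            exact Subtype.ext hxy
      _ ≤ g.roots.card := Multiset.toFinset_card_le _
      _ ≤ g.natDegree := Polynomial.card_roots' g
      _ ≤ k := hgdeg
  -- generic distance lower bound, and the hammingDist formula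
  have hdist : ∀ f : F[X], f.degree < (k : ℕ) →
      hammingDist (fun x : ↥D => u.eval (x : F)) (fun x : ↥D => f.eval (x : F))
        = (q - l) - (Finset.univ.filter
            (fun x : ↥D => u.eval (x : F) = f.eval (x : F))).card := by
    intro f _
    have hsplit := Finset.card_filter_add_card_filter_not
      (s := (Finset.univ : Finset ↥D))
      (p := fun x : ↥D => u.eval (x : F) = f.eval (x : F))
    rw [Finset.card_univ, hcardD'] at hsplit
    have : hammingDist (fun x : ↥D => u.eval (x : F))
        (fun x : ↥D => f.eval (x : F))
        = (Finset.univ.filter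
            (fun x : ↥D => ¬ (u.eval (x : F) = f.eval (x : F)))).card := rfl
    omega
  -- membership: interpolation polynomial achieving distance exactly n - k
  obtain ⟨T, hTsub, hTcard⟩ := Finset.exists_subset_card_eq hkD
  set f0 : F[X] := Lagrange.interpolate T id (fun x => u.eval x) with hf0
  have hinj : Set.InjOn id (T : Set F) := fun x _ y _ h => h
  have hf0deg : f0.degree < (k : ℕ) := by
    rw [hf0, ← hTcard]
    exact Lagrange.degree_interpolate_lt _ hinj
  have hAcard : (Finset.univ.filter
      (fun x : ↥D => u.eval (x : F) = f0.eval (x : F))).card = k := by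
    refine le_antisymm (key f0 hf0deg) ?_
    have hTsubA : T ⊆ Finset.image Subtype.val (Finset.univ.filter
        (fun x : ↥D => u.eval (x : F) = f0.eval (x : F))) := by
      intro x hx
      rw [Finset.mem_image]
      refine ⟨⟨x, hTsub hx⟩, ?_, rfl⟩
      rw [Finset.mem_filter]
      exact ⟨Finset.mem_univ _, (Lagrange.eval_interpolate_at_node (fun x => u.eval x) hinj hx).symm⟩
    calc k = T.card := hTcard.symm
      _ ≤ _ := Finset.card_le_card hTsubA
      _ ≤ _ := Finset.card_image_le
  have hmemS : (q - l) - k ∈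
      {d : ℕ | ∃ w ∈ genRSCode F D k, d = hammingDist
        (fun x : ↥D => u.eval (x : F)) w} := by
    refine ⟨fun x : ↥D => f0.eval (x : F), ⟨f0, hf0deg, fun _ => rfl⟩, ?_⟩
    rw [hdist f0 hf0deg, hAcard]
  -- conclusion
  refine le_antisymm (Nat.sInf_le hmemS) (le_csInf ⟨_, hmemS⟩ ?_)
  rintro d ⟨w, ⟨f, hfd, hfw⟩, rfl⟩
  have hweq : w = fun x : ↥D => f.eval (x : F) := funext hfw
  rw [hweq, hdist f hfd]
  have := key f hfd
  omega
end

section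
/- Let q be a prime power with q ≥ 4, let l ≥ 1, let a_1, ..., a_l be distinct elements of F_q, let D = F_q \ {a_1, ..., a_l}, and let 2 ≤ k ≤ q - l - 1. Fix j with 1 ≤ j ≤ l and set f_j(x) = (x - a_j)^{q-2}. Then the maximum, over all polynomials h ∈ F_q[x] of degree at most k-1, of the number of points y ∈ D with f_j(y) = h(y), equals exactly k. -/
open Polynomial

/-- With `D = F_q \ {a_1, ..., a_l}`, `2 ≤ k ≤ q - l - 1` and
`f_j(x) = (x - a_j)^(q-2)`, the maximum over polynomials `h` of degree at most
`k - 1` of the number of points `y ∈ D` with `f_j(y) = h(y)` equals `k`. -/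
theorem max_agreements_eq_k {F : Type*} [Field F] [Fintype F] [DecidableEq F]
    (q l k : ℕ) (hq : q = Fintype.card F) (hq4 : 4 ≤ q) (hl : 1 ≤ l)
    (a : Fin l → F) (ha : Function.Injective a)
    (D : Finset F) (hD : D = Finset.univ \ Finset.image a Finset.univ)
    (hk2 : 2 ≤ k) (hk : k ≤ q - l - 1) (j : Fin l) :
    sSup {m : ℕ | ∃ h : F[X], h.degree < (k : ℕ) ∧
        m = (D.filter (fun y => ((X - C (a j)) ^ (q - 2)).eval y = h.eval y)).card}
      = k := by
  classical
  -- cardinality of D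
  have hla : l ≤ q := by
    rw [hq]
    calc l = (Finset.image a Finset.univ).card := by
            rw [Finset.card_image_of_injective _ ha, Finset.card_univ, Fintype.card_fin]
      _ ≤ (Finset.univ : Finset F).card := Finset.card_le_card (Finset.subset_univ _)
      _ = Fintype.card F := Finset.card_univ
  have hDcard : D.card = q - l := by
    subst hD
    rw [Finset.card_sdiff_of_subset (Finset.subset_univ _), Finset.card_image_of_injective _ ha,
      Finset.card_univ, Finset.card_univ, Fintype.card_fin, hq]
  have hne : ∀ y ∈ D, y ≠ a j := by
    intro y hy
    subst hD
    simp only [Finset.mem_sdiff, Finset.mem_image, Finset.mem_univ, true_and] at hy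
    exact fun h => hy ⟨j, h.symm⟩
  -- x^(q-2) = x⁻¹ for x ≠ 0
  have hpow : ∀ x : F, x ≠ 0 → x ^ (q - 2) = x⁻¹ := by
    intro x hx
    have h1 : x ^ (q - 1) = 1 := by
      rw [hq]; exact FiniteField.pow_card_sub_one_eq_one x hx
    have h2 : x ^ (q - 2) * x = 1 := by
      rw [← pow_succ, show q - 2 + 1 = q - 1 by omega, h1]
    exact eq_inv_of_mul_eq_one_left (by rw [mul_comm] at h2; rwa [mul_comm])
  -- key equivalence
  have hkey : ∀ (h : F[X]) (y : F), y ∈ D →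
      (((X - C (a j)) ^ (q - 2)).eval y = h.eval y ↔
        ((X - C (a j)) * h - 1).eval y = 0) := by
    intro h y hy
    have hne' : y - a j ≠ 0 := sub_ne_zero.mpr (hne y hy)
    simp only [eval_pow, eval_sub, eval_X, eval_C, eval_mul, eval_one]
    rw [hpow _ hne', sub_eq_zero]
    constructor
    · intro he; rw [← he]; field_simp
    · intro he
      exact (eq_inv_of_mul_eq_one_right he).symm
  -- upper bound
  have hub : ∀ h : F[X], h.degree < (k : ℕ) →
      (D.filter (fun y => ((X - C (a j)) ^ (q - 2)).eval y = h.eval y)).card ≤ k := by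
    intro h hdeg
    set P : F[X] := (X - C (a j)) * h - 1 with hP
    have hPne : P ≠ 0 := by
      intro h0
      have : P.eval (a j) = -1 := by simp [hP]
      rw [h0] at this
      simp at this
    have hPdeg : P.natDegree ≤ k := by
      have h1 : ((X - C (a j)) * h).natDegree ≤ 1 + h.natDegree := by
        refine le_trans (natDegree_mul_le) ?_
        simp [natDegree_X_sub_C]
      have h2 : h.natDegree ≤ k - 1 := by
        by_cases hz : h = 0
        · simp [hz]
        · have := (natDegree_lt_iff_degree_lt hz).mpr hdeg
          omega
      refine le_trans (natDegree_sub_le _ _) ?_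
      simp only [natDegree_one]
      omega
    calc (D.filter (fun y => ((X - C (a j)) ^ (q - 2)).eval y = h.eval y)).card
        ≤ P.roots.toFinset.card := by
          apply Finset.card_le_card
          intro y hy
          rw [Finset.mem_filter] at hy
          rw [Multiset.mem_toFinset, mem_roots hPne]
          exact (hkey h y hy.1).mp hy.2
      _ ≤ Multiset.card P.roots := Multiset.toFinset_card_le _
      _ ≤ P.natDegree := P.card_roots'
      _ ≤ k := hPdeg
  -- lower bound: exhibit h achieving k
  have hkD : k ≤ D.card := by rw [hDcard]; omega
  obtain ⟨S, hSD, hScard⟩ := Finset.exists_subset_card_eq hkD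
  set r : F → F := fun y => (y - a j) ^ (q - 2) with hr
  set h₀ : F[X] := Lagrange.interpolate S id r with hh
  have hinj : Set.InjOn (id : F → F) S := Function.injective_id.injOn
  have hdeg₀ : h₀.degree < (k : ℕ) := by
    rw [hh, ← hScard]
    exact Lagrange.degree_interpolate_lt r hinj
  have hmem : k ∈ {m : ℕ | ∃ h : F[X], h.degree < (k : ℕ) ∧
      m = (D.filter (fun y => ((X - C (a j)) ^ (q - 2)).eval y = h.eval y)).card} := by
    refine ⟨h₀, hdeg₀, ?_⟩
    have hSsub : S ⊆ D.filter (fun y => ((X - C (a j)) ^ (q - 2)).eval y = h₀.eval y) := by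
      intro y hy
      rw [Finset.mem_filter]
      refine ⟨hSD hy, ?_⟩
      have := Lagrange.eval_interpolate_at_node r hinj hy
      simp only [id] at this
      rw [hh, this]
      simp [hr, eval_pow]
    have hge : k ≤ (D.filter (fun y => ((X - C (a j)) ^ (q - 2)).eval y = h₀.eval y)).card := by
      rw [← hScard]; exact Finset.card_le_card hSsub
    have hle := hub h₀ hdeg₀
    omega
  apply le_antisymm
  · apply csSup_le ⟨k, hmem⟩
    rintro m ⟨h, hdeg, rfl⟩
    exact hub h hdeg
  · exact le_csSup ⟨k, by rintro m ⟨h, hdeg, rfl⟩; exact hub h hdeg⟩ hmem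
end

section
/- Let q be a prime power, let l ≥ 1, let a_1, ..., a_l be distinct elements of F_q, let D = F_q \ {a_1, ..., a_l}, and let 1 ≤ k ≤ q - l - 1. Fix j with 1 ≤ j ≤ l and set f_j(x) = (x - a_j)^{q-2}. Then there exists a polynomial g ∈ F_q[x] of degree at most k-1 such that #{y ∈ D : f_j(y) = g(y)} = k. Concretely, choosing k distinct nonzero elements c_1, ..., c_k of F_q \ {a_1 - a_j, ..., a_l - a_j} and setting g_j(x) = (1/x)(1 - ∏_{i=1}^{k}(1 - c_i^{-1} x)) (which is a polynomial of degree k-1), the polynomial g(x) = g_j(x - a_j) agrees with f_j exactly at the k points c_1 + a_j, ..., c_k + a_j, all of which lie in D. -/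
open Polynomial

/-- With `D = F_q \ {a_1, ..., a_l}`, `1 ≤ k ≤ q - l - 1` and
`f_j(x) = (x - a_j)^(q-2)`: given `k` distinct nonzero elements `c_1, ..., c_k`
of `F_q \ {a_1 - a_j, ..., a_l - a_j}`, the polynomial `g_j(x)` determined by
`x * g_j(x) = 1 - ∏ (1 - c_i⁻¹ x)` has degree `k - 1`, and
`g(x) = g_j(x - a_j)` agrees with `f_j` on `D` exactly at the `k` points
`c_1 + a_j, ..., c_k + a_j`, all of which lie in `D`.  In particular there is a
polynomial of degree at most `k - 1` agreeing with `f_j` at exactly `k` points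
of `D`. -/
theorem exists_poly_k_agreements {F : Type*} [Field F] [Fintype F] [DecidableEq F]
    (q l k : ℕ) (hq : q = Fintype.card F) (hl : 1 ≤ l)
    (a : Fin l → F) (ha : Function.Injective a)
    (D : Finset F) (hD : D = Finset.univ \ Finset.image a Finset.univ)
    (hk1 : 1 ≤ k) (hk : k ≤ q - l - 1) (j : Fin l)
    (c : Fin k → F) (hc : Function.Injective c)
    (hc0 : ∀ i, c i ≠ 0) (hca : ∀ i t, c i ≠ a t - a j) :
    (∃ g : F[X], g.degree < (k : ℕ) ∧
        (D.filter (fun y => ((X - C (a j)) ^ (q - 2)).eval y = g.eval y)).card = k) ∧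
      ∃ gj : F[X], X * gj = 1 - ∏ i : Fin k, (1 - C (c i)⁻¹ * X) ∧
        gj.degree = ((k - 1 : ℕ) : WithBot ℕ) ∧
        D.filter (fun y =>
            ((X - C (a j)) ^ (q - 2)).eval y = (gj.comp (X - C (a j))).eval y)
          = Finset.image (fun i => c i + a j) Finset.univ ∧
        Finset.image (fun i => c i + a j) Finset.univ ⊆ D ∧
        (Finset.image (fun i => c i + a j) Finset.univ).card = k := by
  have hq2 : 2 ≤ q := by rw [hq]; exact Fintype.one_lt_card
  set P : F[X] := 1 - ∏ i : Fin k, (1 - C (c i)⁻¹ * X) with hP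
  -- X divides P
  have hPdvd : X ∣ P := by
    rw [X_dvd_iff, coeff_zero_eq_eval_zero]
    simp [hP, eval_prod]
  obtain ⟨gj, hgj⟩ := hPdvd
  -- degree of P
  have hdegfac : ∀ i : Fin k, (1 - C (c i)⁻¹ * X).degree = 1 := by
    intro i
    have h1 : (C (c i)⁻¹ * X).degree = 1 := degree_C_mul_X (inv_ne_zero (hc0 i))
    have h2 : (1 : F[X]).degree < (C (c i)⁻¹ * X).degree := by
      rw [h1]; exact lt_of_le_of_lt degree_one_le (by norm_num)
    rw [degree_sub_eq_right_of_degree_lt h2, h1]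
  have hdegprod : (∏ i : Fin k, (1 - C (c i)⁻¹ * X)).degree = (k : WithBot ℕ) := by
    rw [degree_prod]
    simp [hdegfac]
  have hdegP : P.degree = (k : WithBot ℕ) := by
    rw [hP]
    have : (1 : F[X]).degree < (∏ i : Fin k, (1 - C (c i)⁻¹ * X)).degree := by
      rw [hdegprod]
      exact lt_of_le_of_lt degree_one_le (by exact_mod_cast hk1)
    rw [degree_sub_eq_right_of_degree_lt this, hdegprod]
  have hPne : P ≠ 0 := fun h => by simp [h] at hdegP
  have hgjne : gj ≠ 0 := fun h => hPne (by rw [hgj, h, mul_zero])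
  have hndegP : P.natDegree = k := natDegree_eq_of_degree_eq_some hdegP
  have hndeggj : gj.natDegree = k - 1 := by
    have := hndegP
    rw [hgj, natDegree_mul X_ne_zero hgjne, natDegree_X] at this
    omega
  have hdeggj : gj.degree = ((k - 1 : ℕ) : WithBot ℕ) := by
    rw [degree_eq_natDegree hgjne, hndeggj]
  -- key pointwise equivalence
  have key : ∀ x : F, x ≠ 0 → (x ^ (q - 2) = gj.eval x ↔ ∃ i, x = c i) := by
    intro x hx
    have hx1 : x ^ (q - 1) = 1 := by
      rw [hq]; exact FiniteField.pow_card_sub_one_eq_one x hx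
    have hmul : x * x ^ (q - 2) = 1 := by
      rw [← pow_succ']
      have : q - 2 + 1 = q - 1 := by omega
      rw [this, hx1]
    have hPev : x * gj.eval x = 1 - ∏ i : Fin k, (1 - (c i)⁻¹ * x) := by
      have : P.eval x = (X * gj).eval x := by rw [hgj]
      simpa [hP, eval_prod] using this.symm
    constructor
    · intro h
      have h2 : x * x ^ (q - 2) = x * gj.eval x := by rw [h]
      rw [hmul, hPev] at h2
      have h3 : (∏ i : Fin k, (1 - (c i)⁻¹ * x)) = 0 := by
        linear_combination h2
      rw [Finset.prod_eq_zero_iff] at h3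
      obtain ⟨i, -, hi⟩ := h3
      refine ⟨i, ?_⟩
      have := hc0 i
      field_simp at hi
      exact (sub_eq_zero.mp (hi.trans (mul_zero _))).symm
    · rintro ⟨i, rfl⟩
      have h0 : (∏ t : Fin k, (1 - (c t)⁻¹ * c i)) = 0 := by
        apply Finset.prod_eq_zero (Finset.mem_univ i)
        rw [inv_mul_cancel₀ (hc0 i), sub_self]
      have h2 : c i * gj.eval (c i) = 1 := by rw [hPev, h0, sub_zero]
      have := hmul
      apply mul_left_cancel₀ hx
      rw [h2, hmul]
  -- membership in D
  have hmemD : ∀ i : Fin k, c i + a j ∈ D := by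
    intro i
    rw [hD, Finset.mem_sdiff]
    refine ⟨Finset.mem_univ _, ?_⟩
    simp only [Finset.mem_image, Finset.mem_univ, true_and, not_exists]
    intro t ht
    exact hca i t (by linear_combination ht.symm)
  -- the filter set
  have hset : D.filter (fun y =>
      ((X - C (a j)) ^ (q - 2)).eval y = (gj.comp (X - C (a j))).eval y)
      = Finset.image (fun i => c i + a j) Finset.univ := by
    ext y
    simp only [Finset.mem_filter, Finset.mem_image, Finset.mem_univ, true_and,
      eval_comp, eval_pow, eval_sub, eval_X, eval_C]
    constructor
    · rintro ⟨hyD, heq⟩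
      have hyj : y ≠ a j := by
        rw [hD, Finset.mem_sdiff] at hyD
        intro h
        exact hyD.2 (Finset.mem_image.mpr ⟨j, Finset.mem_univ _, h.symm⟩)
      have hx : y - a j ≠ 0 := sub_ne_zero.mpr hyj
      obtain ⟨i, hi⟩ := (key _ hx).mp heq
      exact ⟨i, by linear_combination -hi⟩
    · rintro ⟨i, rfl⟩
      refine ⟨hmemD i, ?_⟩
      have hx : c i + a j - a j ≠ 0 := by
        rw [add_sub_cancel_right]; exact hc0 i
      exact (key _ hx).mpr ⟨i, by ring⟩
  have hinj : Function.Injective (fun i => c i + a j) := fun i t h => by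
    apply hc; simpa using h
  have hcard : (Finset.image (fun i => c i + a j) Finset.univ).card = k := by
    rw [Finset.card_image_of_injective _ hinj, Finset.card_univ, Fintype.card_fin]
  refine ⟨⟨gj.comp (X - C (a j)), ?_, ?_⟩, gj, hgj.symm, hdeggj, hset, ?_, hcard⟩
  · have hnd : (gj.comp (X - C (a j))).natDegree = k - 1 := by
      rw [natDegree_comp, hndeggj, natDegree_X_sub_C, mul_one]
    calc (gj.comp (X - C (a j))).degree ≤ ((k-1 : ℕ) : WithBot ℕ) := hnd ▸ degree_le_natDegree
      _ < (k : ℕ) := by exact_mod_cast Nat.sub_lt (by omega) one_pos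
  · rw [hset, hcard]
  · intro y hy
    simp only [Finset.mem_image, Finset.mem_univ, true_and] at hy
    obtain ⟨i, rfl⟩ := hy
    exact hmemD i
end

section
/- Let q be a prime power with q ≥ 4, let l ≥ 1, let a_1, ..., a_l be distinct elements of F_q, let D = F_q \ {a_1, ..., a_l}, and let 2 ≤ k ≤ q - l - 1. Fix j with 1 ≤ j ≤ l and set f_j(x) = (x - a_j)^{q-2}. Then d(f_j(D), C_q(D,k)) = (q - l) - k; in particular, f_j(D) is a deep hole of the generalized Reed-Solomon code C_q(D,k). -/
open Polynomial

lemma hammingDist_eq_card_filter {F : Type*} [DecidableEq F] {D : Finset F}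
    (u w : ↥D → F) :
    hammingDist u w = (Finset.univ.filter fun x : ↥D => u x ≠ w x).card := rfl

/-- With `D = F_q \ {a_1, ..., a_l}`, `2 ≤ k ≤ q - l - 1` and
`f_j(x) = (x - a_j)^(q-2)`, the error distance of `f_j(D)` to `C_q(D,k)` is
`(q - l) - k`; in particular `f_j(D)` is a deep hole. -/
theorem fj_is_deep_hole {F : Type*} [Field F] [Fintype F] [DecidableEq F]
    (q l k : ℕ) (hq : q = Fintype.card F) (hq4 : 4 ≤ q) (hl : 1 ≤ l)
    (a : Fin l → F) (ha : Function.Injective a)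
    (D : Finset F) (hD : D = Finset.univ \ Finset.image a Finset.univ)
    (hk2 : 2 ≤ k) (hk : k ≤ q - l - 1) (j : Fin l) :
    errDist D k (fun x : ↥D => ((X - C (a j)) ^ (q - 2)).eval (x : F))
      = (q - l) - k := by
  classical
  set u : ↥D → F := fun x => ((X - C (a j)) ^ (q - 2)).eval (x : F) with hu
  have hlq : l ≤ q := by
    rw [hq]
    simpa using Fintype.card_le_of_injective a ha
  have haj : a j ∉ D := by subst hD; simp
  have hcardD : D.card = q - l := by
    subst hD
    rw [Finset.card_sdiff_of_subset (Finset.subset_univ _),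
      Finset.card_image_of_injective _ ha]
    simp [hq]
  have hu_eval : ∀ x : ↥D, u x = ((x : F) - a j) ^ (q - 2) := by
    intro x; simp [hu]
  have hu_inv : ∀ x : ↥D, ((x : F) - a j) * u x = 1 := by
    intro x
    have hne : (x : F) - a j ≠ 0 := by
      rw [sub_ne_zero]
      intro h
      exact haj (h ▸ x.2)
    have h1 : ((x : F) - a j) ^ (q - 1) = 1 := by
      rw [hq]; exact FiniteField.pow_card_sub_one_eq_one _ hne
    rw [hu_eval]
    calc ((x : F) - a j) * ((x : F) - a j) ^ (q - 2)
        = ((x : F) - a j) ^ (q - 2 + 1) := (pow_succ' _ _).symm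
      _ = 1 := by rw [show q - 2 + 1 = q - 1 by omega]; exact h1
  -- Lower bound
  have hlow : ∀ w ∈ genRSCode F D k, (q - l) - k ≤ hammingDist u w := by
    rintro w ⟨f, hdf, hwf⟩
    set g : F[X] := (X - C (a j)) * f - 1 with hg
    have hg0 : g ≠ 0 := by
      intro h
      have := congrArg (eval (a j)) h
      simp [hg] at this
    have hdeg : g.natDegree ≤ k := by
      rcases eq_or_ne f 0 with rfl | hf0
      · simp [hg]
      · have hfd : f.natDegree < k := by
          rwa [degree_eq_natDegree hf0, Nat.cast_lt] at hdf
        calc g.natDegree ≤ max ((X - C (a j)) * f).natDegree (1 : F[X]).natDegree :=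
              natDegree_sub_le _ _
          _ ≤ k := by
              rw [natDegree_mul (X_sub_C_ne_zero _) hf0, natDegree_X_sub_C,
                natDegree_one]
              omega
    set A : Finset ↥D := Finset.univ.filter fun x : ↥D => u x = w x with hA
    have hAcard : A.card ≤ k := by
      have hsub : A.image (fun x : ↥D => (x : F)) ⊆ g.roots.toFinset := by
        intro y hy
        simp only [Finset.mem_image] at hy
        obtain ⟨x, hx, rfl⟩ := hy
        have hxA : u x = w x := by
          simpa [hA] using hx
        rw [Multiset.mem_toFinset, mem_roots hg0]
        have : eval (x : F) g = 0 := by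
          simp only [hg, eval_sub, eval_mul, eval_sub, eval_X, eval_C, eval_one]
          rw [← hwf x, ← hxA, hu_inv x, sub_self]
        exact this
      calc A.card = (A.image (fun x : ↥D => (x : F))).card :=
            (Finset.card_image_of_injective _ Subtype.val_injective).symm
        _ ≤ g.roots.toFinset.card := Finset.card_le_card hsub
        _ ≤ Multiset.card g.roots := Multiset.toFinset_card_le _
        _ ≤ g.natDegree := card_roots' g
        _ ≤ k := hdeg
    have hsplit : A.card + hammingDist u w = q - l := by
      rw [hammingDist_eq_card_filter, hA]
      rw [Finset.card_filter_add_card_filter_not]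
      simp [hcardD]
    omega
  -- Upper bound: a codeword at distance ≤ (q - l) - k
  obtain ⟨S, hSD, hScard⟩ := Finset.exists_subset_card_eq
    (show k ≤ D.card by omega)
  set f : F[X] := Lagrange.interpolate S id (fun y => (y - a j) ^ (q - 2)) with hf
  have hinj : Set.InjOn (id : F → F) ↑S := Function.injective_id.injOn
  have hfd : f.degree < (k : ℕ) := by
    have := Lagrange.degree_interpolate_lt (s := S) (v := id)
      (fun y => (y - a j) ^ (q - 2)) hinj
    rwa [hScard] at this
  set w : ↥D → F := fun x => f.eval (x : F) with hw
  have hwcode : w ∈ genRSCode F D k := ⟨f, hfd, fun x => rfl⟩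
  have hup : hammingDist u w ≤ (q - l) - k := by
    have hagree : ∀ x : ↥D, (x : F) ∈ S → u x = w x := by
      intro x hxS
      have := Lagrange.eval_interpolate_at_node (s := S) (v := id) (i := (x : F))
        (fun y => (y - a j) ^ (q - 2)) hinj hxS
      rw [hu_eval]
      exact this.symm
    have hsub : (Finset.univ.filter fun x : ↥D => u x ≠ w x) ⊆
        Finset.univ.filter fun x : ↥D => (x : F) ∉ S := by
      intro x hx
      simp only [Finset.mem_filter, Finset.mem_univ, true_and] at hx ⊢
      exact fun hxS => hx (hagree x hxS)
    have himg : (Finset.univ.filter fun x : ↥D => (x : F) ∈ S).image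
        (fun x : ↥D => (x : F)) = S := by
      ext y
      simp only [Finset.mem_image, Finset.mem_filter, Finset.mem_univ, true_and]
      exact ⟨fun ⟨x, hx, hxy⟩ => hxy ▸ hx, fun hy => ⟨⟨y, hSD hy⟩, hy, rfl⟩⟩
    have hci := Finset.card_image_of_injective
      (Finset.univ.filter fun x : ↥D => (x : F) ∈ S)
      (Subtype.val_injective : Function.Injective (fun x : ↥D => (x : F)))
    rw [himg] at hci
    have hin : (Finset.univ.filter fun x : ↥D => (x : F) ∈ S).card = k := by
      rw [← hci, hScard]
    have htot : (Finset.univ.filter fun x : ↥D => (x : F) ∈ S).card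
        + (Finset.univ.filter fun x : ↥D => (x : F) ∉ S).card = q - l := by
      rw [Finset.card_filter_add_card_filter_not]
      simp [hcardD]
    calc hammingDist u w ≤ (Finset.univ.filter fun x : ↥D => (x : F) ∉ S).card := by
          rw [hammingDist_eq_card_filter]; exact Finset.card_le_card hsub
      _ = (q - l) - k := by omega
  have hexact : hammingDist u w = (q - l) - k :=
    le_antisymm hup (hlow w hwcode)
  rw [errDist]
  apply le_antisymm
  · exact Nat.sInf_le ⟨w, hwcode, hexact.symm⟩
  · refine le_csInf ⟨hammingDist u w, ⟨w, hwcode, rfl⟩⟩ ?_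
    rintro d ⟨w', hw', rfl⟩
    exact hlow w' hw'
end
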